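/- Let k > 0 be a real number and let T : ℕ → ℝ be a function with T(n) ≥ 0 for all n ≥ 1, satisfying T(n) ≤ k·n·ln(n) + (2/n)·Σ_{i=1}^{n−1} T(i) for every integer n ≥ 1. Then T(n) ≤ 2k·n·(ln n)² for every integer n ≥ 1. -/

import Mathlib

/-- Let `k > 0` and let `T : ℕ → ℝ` be nonnegative on positive integers, satisfying
`T n ≤ k n ln n + (2 / n) Σ_{i=1}^{n−1} T i` for every `n ≥ 1`. Then
`T n ≤ 2 k n (ln n)²` for every `n ≥ 1`. -/

lemma qs_deriv (x : ℝ) (hx : 0 < x) :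
    HasDerivAt (fun y : ℝ => y^2*(Real.log y)^2/2 - y^2*Real.log y/2 + y^2/4)
      (x * (Real.log x)^2) x := by
  have hlog := Real.hasDerivAt_log hx.ne'
  have hsq : HasDerivAt (fun y : ℝ => y^2) (2*x) x := by
    simpa using (hasDerivAt_pow 2 x)
  have h1 := hsq.mul (hlog.pow 2)
  have h2 := hsq.mul hlog
  have := ((h1.div_const 2).sub (h2.div_const 2)).add (hsq.div_const 4)
  refine this.congr_deriv ?_; simp only [Pi.pow_apply]
  field_simp
  ring

lemma qs_integral (n : ℕ) (hn : 1 ≤ n) :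
    ∫ x in (1:ℝ)..(n:ℝ), x * (Real.log x)^2
      = (n:ℝ)^2*(Real.log n)^2/2 - (n:ℝ)^2*Real.log n/2 + (n:ℝ)^2/4 - 1/4 := by
  have hn1 : (1:ℝ) ≤ n := by exact_mod_cast hn
  have huIcc : Set.uIcc (1:ℝ) (n:ℝ) = Set.Icc 1 (n:ℝ) := Set.uIcc_of_le hn1
  have := intervalIntegral.integral_eq_sub_of_hasDerivAt
    (f := fun y : ℝ => y^2*(Real.log y)^2/2 - y^2*Real.log y/2 + y^2/4)
    (f' := fun x : ℝ => x * (Real.log x)^2) (a := 1) (b := n)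
    (fun x hx => by
      rw [huIcc] at hx
      exact qs_deriv x (by linarith [hx.1]))
    ?_
  · rw [this]; simp only [Real.log_one]; ring
  · apply ContinuousOn.intervalIntegrable
    apply ContinuousOn.mul continuousOn_id
    apply ContinuousOn.pow
    apply Real.continuousOn_log.mono
    intro x hx
    rw [huIcc] at hx
    simp only [Set.mem_compl_iff, Set.mem_singleton_iff]
    intro h; rw [h] at hx; linarith [hx.1]

lemma qs_mono (n : ℕ) : MonotoneOn (fun x : ℝ => x * (Real.log x)^2) (Set.Icc (1:ℝ) n) := by
  intro a ha b hb hab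
  have h1a : (1:ℝ) ≤ a := ha.1
  have h1b : (1:ℝ) ≤ b := hb.1
  have hla : 0 ≤ Real.log a := Real.log_nonneg h1a
  have hlb : 0 ≤ Real.log b := Real.log_nonneg h1b
  have hl : Real.log a ≤ Real.log b := Real.log_le_log (by linarith) hab
  have hsq : (Real.log a)^2 ≤ (Real.log b)^2 := by nlinarith
  have t1 : a * (Real.log a)^2 ≤ b * (Real.log a)^2 :=
    mul_le_mul_of_nonneg_right hab (sq_nonneg _)
  have t2 : b * (Real.log a)^2 ≤ b * (Real.log b)^2 :=
    mul_le_mul_of_nonneg_left hsq (by linarith)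
  simpa using t1.trans t2

lemma qs_sum (n : ℕ) (hn : 1 ≤ n) :
    ∑ i ∈ Finset.Icc 1 (n-1), (i:ℝ) * (Real.log i)^2
      ≤ (n:ℝ)^2*(Real.log n)^2/2 - (n:ℝ)^2*Real.log n/2 + (n:ℝ)^2/4 := by
  have h1 : ∑ i ∈ Finset.Ico 1 n, (fun x : ℝ => x * (Real.log x)^2) (i:ℝ)
      ≤ ∫ x in ((1:ℕ):ℝ)..((n:ℕ):ℝ), x * (Real.log x)^2 :=
    MonotoneOn.sum_le_integral_Ico hn (by simpa using qs_mono n)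
  have he : Finset.Icc 1 (n-1) = Finset.Ico 1 n := by
    rw [← Finset.Ico_add_one_right_eq_Icc]; congr 1; omega
  rw [he]
  calc ∑ i ∈ Finset.Ico 1 n, (i:ℝ) * (Real.log i)^2
      ≤ ∫ x in (1:ℝ)..(n:ℝ), x * (Real.log x)^2 := by simpa using h1
    _ = _ := qs_integral n hn
    _ ≤ _ := by linarith


theorem quicksort_recurrence (k : ℝ) (hk : 0 < k) (T : ℕ → ℝ)
    (hT0 : ∀ n : ℕ, 1 ≤ n → 0 ≤ T n)
    (hrec : ∀ n : ℕ, 1 ≤ n →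
      T n ≤ k * n * Real.log n + (2 / n) * ∑ i ∈ Finset.Icc 1 (n - 1), T i) :
    ∀ n : ℕ, 1 ≤ n → T n ≤ 2 * k * n * (Real.log n) ^ 2 := by
  intro n
  induction n using Nat.strong_induction_on with
  | _ n ih =>
  intro hn
  have hT1 : T 1 ≤ 0 := by
    have := hrec 1 le_rfl
    simpa using this
  rcases Nat.lt_or_ge n 3 with h3 | h3
  · interval_cases n
    · simpa using hT1
    · have := hrec 2 (by norm_num)
      simp at this
      have hlog2 : (0.6931471803 : ℝ) < Real.log 2 := Real.log_two_gt_d9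
      have hT2 : T 2 ≤ 2 * k * Real.log 2 := by
        calc T 2 ≤ k * 2 * Real.log 2 + T 1 := this
          _ ≤ 2 * k * Real.log 2 := by linarith
      calc T 2 ≤ 2 * k * Real.log 2 := hT2
        _ ≤ 2 * k * 2 * (Real.log 2)^2 := by
            have hp : (0:ℝ) < Real.log 2 := by linarith
            nlinarith [mul_pos hk hp, mul_nonneg (mul_pos hk hp).le
              (by linarith : (0:ℝ) ≤ 2*Real.log 2 - 1)]
        _ = 2 * k * (2:ℕ) * (Real.log (2:ℕ))^2 := by norm_num
  · -- n ≥ 3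
    have hnR : (3:ℝ) ≤ n := by exact_mod_cast h3
    have hn0 : (0:ℝ) < n := by linarith
    have hL : 1 ≤ Real.log n := by
      have : Real.exp 1 < 3 := by
        have := Real.exp_one_lt_d9; linarith
      have : Real.exp 1 < n := by linarith
      linarith [(Real.lt_log_iff_exp_lt hn0).mpr this]
    set L := Real.log n with hLdef
    have hSle : ∑ i ∈ Finset.Icc 1 (n-1), T i
        ≤ 2 * k * ∑ i ∈ Finset.Icc 1 (n-1), (i:ℝ) * (Real.log i)^2 := by
      rw [Finset.mul_sum]
      apply Finset.sum_le_sum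
      intro i hi
      have hmem := Finset.mem_Icc.mp hi
      have hi1 : 1 ≤ i := hmem.1
      have hin : i < n := by omega
      have := ih i hin hi1
      linarith
    have hB := qs_sum n hn
    have hS2 : ∑ i ∈ Finset.Icc 1 (n-1), T i
        ≤ 2 * k * ((n:ℝ)^2*L^2/2 - (n:ℝ)^2*L/2 + (n:ℝ)^2/4) := by
      calc _ ≤ 2 * k * ∑ i ∈ Finset.Icc 1 (n-1), (i:ℝ) * (Real.log i)^2 := hSle
        _ ≤ _ := by
          apply mul_le_mul_of_nonneg_left hB (by linarith)
    have hrecn := hrec n hn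
    have h2 : (2/(n:ℝ)) * ∑ i ∈ Finset.Icc 1 (n-1), T i
        ≤ (2/(n:ℝ)) * (2 * k * ((n:ℝ)^2*L^2/2 - (n:ℝ)^2*L/2 + (n:ℝ)^2/4)) :=
      mul_le_mul_of_nonneg_left hS2 (by positivity)
    have h3eq : (2/(n:ℝ)) * (2 * k * ((n:ℝ)^2*L^2/2 - (n:ℝ)^2*L/2 + (n:ℝ)^2/4))
        = 2*k*n*L^2 - 2*k*n*L + k*n := by
      field_simp
      ring
    have hkn : k * n ≤ k * n * L := by
      nlinarith [mul_nonneg (mul_nonneg hk.le hn0.le) (by linarith : (0:ℝ) ≤ L - 1)]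
    calc T n ≤ k * n * L + (2/(n:ℝ)) * ∑ i ∈ Finset.Icc 1 (n-1), T i := hrecn
      _ ≤ k * n * L + (2*k*n*L^2 - 2*k*n*L + k*n) := by rw [← h3eq]; linarith
      _ ≤ 2 * k * n * L^2 := by linarith
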